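/- arXiv:1403.4404 — 6 statements merged into one kernel-verified Lean document; each statement's English description precedes it below -/
import Mathlib

section
/- For any graph G, the Mycielskian M(G) satisfies χ(M(G)) = χ(G) + 1, provided G has at least one edge. -/
/-- Adjacency of the Mycielskian: vertices are `Sum.inl u` (original vertices),
`Sum.inr (Sum.inl v)` (twin vertices) and `Sum.inr (Sum.inr ())` (the root). -/
def mycAdj {V : Type*} (G : SimpleGraph V) : (V ⊕ V ⊕ Unit) → (V ⊕ V ⊕ Unit) → Prop
  | .inl u, .inl u' => G.Adj u u'
  | .inl u, .inr (.inl v) => G.Adj u v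
  | .inr (.inl v), .inl u => G.Adj v u
  | .inr (.inl _), .inr (.inr _) => True
  | .inr (.inr _), .inr (.inl _) => True
  | _, _ => False

/-- The Mycielskian of a graph. -/
def mycielskian {V : Type*} (G : SimpleGraph V) : SimpleGraph (V ⊕ V ⊕ Unit) where
  Adj := mycAdj G
  symm := by
    constructor
    rintro (u | v | w) (u' | v' | w') h <;> simp_all [mycAdj] <;> exact G.adj_symm h
  loopless := by
    constructor
    rintro (u | v | w) h <;> simp_all [mycAdj]

lemma myc_up {V : Type*} (G : SimpleGraph V) {n : ℕ} (hn : G.Colorable n) :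
    (mycielskian G).Colorable (n + 1) := by
  obtain ⟨C⟩ := hn
  refine ⟨SimpleGraph.Coloring.mk
    (fun x => match x with
      | .inl u => (C u).castSucc
      | .inr (.inl v) => (C v).castSucc
      | .inr (.inr _) => Fin.last n) ?_⟩
  rintro (u | v | w) (u' | v' | w') hadj <;>
    simp only [mycielskian, mycAdj] at hadj <;>
    first
      | exact hadj.elim
      | exact fun e => C.valid hadj (Fin.castSucc_inj.mp e)
      | exact (Fin.castSucc_lt_last _).ne
      | exact (Fin.castSucc_lt_last _).ne'

lemma myc_down {V : Type*} (G : SimpleGraph V) {n : ℕ}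
    (hn : (mycielskian G).Colorable (n + 1)) : G.Colorable n := by
  obtain ⟨C⟩ := hn
  set k : Fin (n+1) := C (.inr (.inr ())) with hk
  have hvw : ∀ u : V, C (.inr (.inl u)) ≠ k := by
    intro u
    exact C.valid (show (mycielskian G).Adj (.inr (.inl u)) (.inr (.inr ())) from trivial)
  let d : V → {x : Fin (n+1) // x ≠ k} := fun u =>
    if h : C (.inl u) = k then ⟨C (.inr (.inl u)), hvw u⟩ else ⟨C (.inl u), h⟩
  have hd : ∀ {u u'}, G.Adj u u' → d u ≠ d u' := by
    intro u u' hadj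
    have h1 : C (.inl u) ≠ C (.inl u') := C.valid hadj
    have h2 : C (.inr (.inl u)) ≠ C (.inl u') := C.valid hadj
    have h3 : C (.inl u) ≠ C (.inr (.inl u')) := C.valid hadj
    simp only [d]
    split_ifs with ha hb hb <;> simp only [ne_eq, Subtype.mk.injEq]
    · exact fun e => h1 (ha.trans hb.symm)
    · exact h2
    · exact h3
    · exact h1
  have : G.Colorable (Fintype.card {x : Fin (n+1) // x ≠ k}) :=
    (SimpleGraph.Coloring.mk d fun hadj => hd hadj).colorable
  rwa [Fintype.card_subtype_compl, Fintype.card_fin, Fintype.card_unique] at this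

theorem stmt_3 {V : Type*} (G : SimpleGraph V) (h : ∃ u v, G.Adj u v) :
    (mycielskian G).chromaticNumber = G.chromaticNumber + 1 := by
  apply le_antisymm
  · rcases eq_or_ne G.chromaticNumber ⊤ with ht | ht
    · simp [ht]
    · obtain ⟨m, hm⟩ := (SimpleGraph.chromaticNumber_ne_top_iff_exists).mp ht
      have hc := G.colorable_chromaticNumber hm
      have := (myc_up G hc).chromaticNumber_le
      calc (mycielskian G).chromaticNumber ≤ ((ENat.toNat G.chromaticNumber : ℕ) + 1 : ℕ) := this
        _ = G.chromaticNumber + 1 := by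
            push_cast
            rw [ENat.coe_toNat ht]
  · rcases eq_or_ne (mycielskian G).chromaticNumber ⊤ with ht | ht
    · simp [ht]
    · obtain ⟨m, hm⟩ := (SimpleGraph.chromaticNumber_ne_top_iff_exists).mp ht
      set N := ENat.toNat (mycielskian G).chromaticNumber with hN
      have hc := (mycielskian G).colorable_chromaticNumber hm
      rw [← hN] at hc
      have hNpos : 0 < N := by
        rcases Nat.eq_zero_or_pos N with h0 | h0
        · exfalso
          rw [h0] at hc
          have := hc.some (.inr (.inr ()))
          exact this.elim0
        · exact h0
      obtain ⟨p, hp⟩ := Nat.exists_eq_add_of_lt hNpos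
      rw [Nat.zero_add] at hp
      have hc' : (mycielskian G).Colorable (p + 1) := by rwa [hp] at hc
      have hG := (myc_down G hc').chromaticNumber_le
      have : G.chromaticNumber + 1 ≤ (p : ℕ∞) + 1 := by
        exact add_le_add_left hG 1
      calc G.chromaticNumber + 1 ≤ (p : ℕ∞) + 1 := this
        _ = (N : ℕ∞) := by rw [hp]; push_cast; ring
        _ = (mycielskian G).chromaticNumber := ENat.coe_toNat ht
end

section
/- The Kneser graph KG(n,k), with vertices the k-subsets of [n] and edges between disjoint subsets, admits a proper coloring with n − 2k + 2 colors when n ≥ 2k. -/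
/-- The Kneser graph `KG(n,k)`: vertices are the `k`-subsets of `[n]`,
adjacent iff disjoint. -/
def kneserGraph (n k : ℕ) : SimpleGraph {s : Finset (Fin n) // s.card = k} where
  Adj A B := A ≠ B ∧ Disjoint A.1 B.1
  symm := ⟨fun _ _ ⟨h1, h2⟩ => ⟨h1.symm, h2.symm⟩⟩
  loopless := ⟨fun _ ⟨h, _⟩ => h rfl⟩

theorem stmt_7 (n k : ℕ) (h : 2 * k ≤ n) :
    (kneserGraph n k).Colorable (n - 2 * k + 2) := by
  rcases Nat.eq_zero_or_pos k with hk | hk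
  · subst hk
    -- no edges: all vertices are the empty set
    refine ⟨⟨fun _ => ⟨0, by omega⟩, ?_⟩⟩
    intro A B hAB _
    exact hAB.1 (Subtype.ext (by
      rw [Finset.card_eq_zero.mp A.2, Finset.card_eq_zero.mp B.2]))
  · set t := n - 2 * k + 1 with ht
    have htn : t ≤ n := by omega
    have hne : ∀ A : {s : Finset (Fin n) // s.card = k}, A.1.Nonempty := by
      intro A
      rw [← Finset.card_pos, A.2]; exact hk
    refine ⟨⟨fun A => ⟨min ((A.1.min' (hne A)).val) t, by omega⟩, ?_⟩⟩
    intro A B hAB hc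
    have hdisj := hAB.2
    set a := A.1.min' (hne A) with ha
    set b := B.1.min' (hne B) with hb
    have hc' : min a.val t = min b.val t := congrArg Fin.val hc
    rcases lt_or_ge a.val t with hat | hat
    · have : min a.val t = a.val := min_eq_left hat.le
      rcases lt_or_ge b.val t with hbt | hbt
      · have hab : a.val = b.val := by
          rw [min_eq_left hat.le, min_eq_left hbt.le] at hc'; exact hc'
        exact hdisj.forall_ne_finset (A.1.min'_mem (hne A))
          (B.1.min'_mem (hne B)) (Fin.ext hab)
      · rw [min_eq_left hat.le, min_eq_right hbt] at hc'; omega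
    · rcases lt_or_ge b.val t with hbt | hbt
      · rw [min_eq_right hat, min_eq_left hbt.le] at hc'; omega
      · -- both sets live in {t, ..., n-1}, which has size 2k-1 < 2k
        have hsub : A.1 ∪ B.1 ⊆ Finset.univ.filter (fun x : Fin n => t ≤ x.val) := by
          intro x hx
          simp only [Finset.mem_filter, Finset.mem_univ, true_and]
          rcases Finset.mem_union.mp hx with hx | hx
          · exact le_trans hat (A.1.min'_le x hx)
          · exact le_trans hbt (B.1.min'_le x hx)
        have hcard : (A.1 ∪ B.1).card = 2 * k := by
          rw [Finset.card_union_of_disjoint hdisj, A.2, B.2]; omega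
        have hle : (Finset.univ.filter (fun x : Fin n => t ≤ x.val)).card ≤ n - t := by
          have : (Finset.univ.filter (fun x : Fin n => t ≤ x.val)).card ≤
              (Finset.Ico t n).card := by
            apply Finset.card_le_card_of_injOn Fin.val
            · intro x hx
              simp only [Finset.mem_coe, Finset.mem_filter, Finset.mem_univ, true_and] at hx
              exact Finset.mem_Ico.mpr ⟨hx, x.isLt⟩
            · intro x _ y _ hxy; exact Fin.ext hxy
          simpa [Nat.card_Ico] using this
        have := Finset.card_le_card hsub
        omega
end

section
/- For the natural ordering I : 1 < 2 < ... < n on [n] and the hypergraph whose hyperedges are the 2-stable k-subsets of [n] (n ≥ 2k), the strong alternation parameter salt_I equals 2k − 1; that is, there exists X ∈ {−1,0,+1}^n with alternation number 2k−1 such that at most one of the positive support X⁺ and negative support X⁻ contains a 2-stable k-subset, and for every X with alternation number 2k both X⁺ and X⁻ contain a 2-stable k-subset. -/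
/-- `l` is an alternating list for `X` within the ground set `[n] = {1,…,n}`. -/
def IsAltList (n : ℕ) (X : ℕ → ℤ) (l : List ℕ) : Prop :=
  (∀ a ∈ l, a ∈ Finset.Icc 1 n) ∧ (∀ a ∈ l, X a ≠ 0) ∧
    l.Chain' (fun a b => a < b ∧ X a * X b < 0)

/-- The alternation number of `X` over `[n]`. -/
noncomputable def altNum (n : ℕ) (X : ℕ → ℤ) : ℕ :=
  sSup {m : ℕ | ∃ l : List ℕ, l.length = m ∧ IsAltList n X l}

/-- The positive support `X⁺ = {i ∈ [n] : x_i = 1}`. -/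
def posSupp (n : ℕ) (X : ℕ → ℤ) : Finset ℕ :=
  (Finset.Icc 1 n).filter (fun i => X i = 1)

/-- The negative support `X⁻ = {i ∈ [n] : x_i = -1}`. -/
def negSupp (n : ℕ) (X : ℕ → ℤ) : Finset ℕ :=
  (Finset.Icc 1 n).filter (fun i => X i = -1)

/-- `S` is a 2-stable subset of `[n]`. -/
def TwoStableSet (n : ℕ) (S : Finset ℕ) : Prop :=
  S ⊆ Finset.Icc 1 n ∧ ∀ i ∈ S, ∀ j ∈ S, i ≠ j →
    2 ≤ |(i : ℤ) - (j : ℤ)| ∧ |(i : ℤ) - (j : ℤ)| ≤ (n : ℤ) - 2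

/-- `A` contains a 2-stable `k`-subset of `[n]`. -/
def ContainsStable (n k : ℕ) (A : Finset ℕ) : Prop :=
  ∃ S ⊆ A, S.card = k ∧ TwoStableSet n S

lemma altList_len_le (X : ℕ → ℤ) (l : List ℕ)
    (hc : l.Chain' (fun a b => a < b ∧ X a * X b < 0))
    (m : ℕ) (hsub : ∀ a ∈ l, a ∈ Finset.Icc 1 m) : l.length ≤ m := by
  have hlt : l.Chain' (· < ·) := hc.imp (fun _ _ h => h.1)
  have hp : l.Pairwise (· < ·) := List.isChain_iff_pairwise.mp hlt
  have hnd : l.Nodup := hp.imp Nat.ne_of_lt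
  calc l.length = l.toFinset.card := (List.toFinset_card_of_nodup hnd).symm
    _ ≤ (Finset.Icc 1 m).card :=
        Finset.card_le_card fun a ha => hsub a (List.mem_toFinset.mp ha)
    _ = m := by simp

lemma altNum_eq (n : ℕ) (X : ℕ → ℤ) (m : ℕ)
    (hw : ∃ l : List ℕ, l.length = m ∧ IsAltList n X l)
    (hub : ∀ l : List ℕ, IsAltList n X l → l.length ≤ m) :
    altNum n X = m := by
  have hb : m ∈ upperBounds {m : ℕ | ∃ l : List ℕ, l.length = m ∧ IsAltList n X l} := by
    rintro x ⟨l, rfl, hl⟩; exact hub l hl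
  exact le_antisymm (csSup_le ⟨m, hw⟩ hb) (le_csSup ⟨m, hb⟩ hw)

lemma getD_gap (l : List ℕ) (hp : l.Pairwise (· < ·)) (i : ℕ) :
    ∀ d, i + d < l.length → l.getD i 0 + d ≤ l.getD (i + d) 0 := by
  intro d
  induction d with
  | zero => intro _; simp
  | succ d ih =>
    intro h
    have h1 : i + d < l.length := by omega
    have h2 := ih h1
    have hlt : l.getD (i + d) 0 < l.getD (i + d + 1) 0 := by
      rw [List.getD_eq_get l 0 ⟨_, h1⟩, List.getD_eq_get l 0 ⟨_, (show i + d + 1 < l.length by omega)⟩]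
      exact List.pairwise_iff_get.mp hp ⟨i + d, h1⟩ ⟨i + d + 1, by omega⟩ (by simp)
    have he : i + (d + 1) = i + d + 1 := by omega
    rw [he]
    omega

lemma twoStable_of_nat (n : ℕ) (S : Finset ℕ) (hn2 : 2 ≤ n)
    (hsub : S ⊆ Finset.Icc 1 n)
    (h : ∀ i ∈ S, ∀ j ∈ S, i < j → i + 2 ≤ j ∧ j ≤ i + (n - 2)) :
    TwoStableSet n S := by
  have key : ∀ i j : ℕ, i + 2 ≤ j → j ≤ i + (n - 2) →
      2 ≤ |(i : ℤ) - (j : ℤ)| ∧ |(i : ℤ) - (j : ℤ)| ≤ (n : ℤ) - 2 := by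
    intro i j h1 h2
    rw [abs_sub_comm, abs_of_nonneg (by push_cast; omega)]
    constructor <;> push_cast <;> omega
  refine ⟨hsub, fun i hi j hj hij => ?_⟩
  rcases Nat.lt_or_ge i j with h1 | h1
  · obtain ⟨ha, hb⟩ := h i hi j hj h1
    exact key i j ha hb
  · have h1' : j < i := by omega
    obtain ⟨ha, hb⟩ := h j hj i hi h1'
    have := key j i ha hb
    rwa [abs_sub_comm] at this

theorem stmt_9 (n k : ℕ) (hk : 1 ≤ k) (hn : 2 * k ≤ n) :
    (∃ X : ℕ → ℤ, (∀ i ∈ Finset.Icc 1 n, X i = -1 ∨ X i = 0 ∨ X i = 1) ∧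
      altNum n X = 2 * k - 1 ∧
      ¬(ContainsStable n k (posSupp n X) ∧ ContainsStable n k (negSupp n X))) ∧
    (∀ X : ℕ → ℤ, (∀ i ∈ Finset.Icc 1 n, X i = -1 ∨ X i = 0 ∨ X i = 1) →
      altNum n X = 2 * k →
      ContainsStable n k (posSupp n X) ∧ ContainsStable n k (negSupp n X)) := by
  constructor
  · -- Part 1
    set X : ℕ → ℤ := fun i =>
      if 1 ≤ i ∧ i ≤ 2 * k - 1 then (if i % 2 = 1 then 1 else -1) else 0 with hX
    refine ⟨X, ?_, ?_, ?_⟩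
    · intro i _
      simp only [hX]
      split_ifs <;> tauto
    · -- altNum = 2k - 1
      apply altNum_eq
      · refine ⟨List.range' 1 (2 * k - 1), by simp, ?_, ?_, ?_⟩
        · intro a ha
          rw [List.mem_range'_1] at ha
          simp only [Finset.mem_Icc]
          omega
        · intro a ha
          rw [List.mem_range'_1] at ha
          simp only [hX]
          rw [if_pos (by omega)]
          split_ifs <;> norm_num
        · refine List.isChain_iff_getElem.mpr ?_
          intro i h
          simp only [List.length_range'] at h
          have hi1 : i < (List.range' 1 (2 * k - 1)).length := by simp; omega
          have hi2 : i + 1 < (List.range' 1 (2 * k - 1)).length := by simp; omega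
          have e1 : (List.range' 1 (2 * k - 1)).get ⟨i, hi1⟩ = 1 + i := by
            simp [List.getElem_range']
          have e2 : (List.range' 1 (2 * k - 1)).get ⟨i + 1, hi2⟩ = 1 + (i + 1) := by
            simp [List.getElem_range']
          simp only [List.get_eq_getElem] at e1 e2
          rw [e1, e2]
          refine ⟨by omega, ?_⟩
          have c1 : X (1 + i) = if (1 + i) % 2 = 1 then 1 else -1 := if_pos (by omega)
          have c2 : X (1 + (i + 1)) = if (1 + (i + 1)) % 2 = 1 then 1 else -1 :=
            if_pos (by omega)
          rcases Nat.mod_two_eq_zero_or_one i with hm | hm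
          · rw [c1, c2, if_pos (by omega), if_neg (by omega)]; norm_num
          · rw [c1, c2, if_neg (by omega), if_pos (by omega)]; norm_num
      · intro l hl
        apply altList_len_le X l hl.2.2
        intro a ha
        have hne := hl.2.1 a ha
        simp only [Finset.mem_Icc]
        by_contra hc
        apply hne
        simp only [hX]
        rw [if_neg (by omega)]
    · -- negSupp has no 2-stable k-subset
      rintro ⟨-, S, hS, hcard, -⟩
      have hsub : negSupp n X ⊆ (Finset.Icc 1 (k - 1)).image (fun j => 2 * j) := by
        intro i hi
        simp only [negSupp, Finset.mem_filter] at hi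
        obtain ⟨-, hx⟩ := hi
        simp only [hX] at hx
        have hcond : (1 ≤ i ∧ i ≤ 2 * k - 1) ∧ i % 2 = 0 := by
          by_contra hc
          rcases Classical.em (1 ≤ i ∧ i ≤ 2 * k - 1) with h1 | h1
          · have h2 : i % 2 = 1 := by omega
            rw [if_pos h1, if_pos h2] at hx
            norm_num at hx
          · rw [if_neg h1] at hx
            norm_num at hx
        simp only [Finset.mem_image, Finset.mem_Icc]
        exact ⟨i / 2, by omega, by omega⟩
      have h1 : S.card ≤ (negSupp n X).card := Finset.card_le_card hS
      have h2 : (negSupp n X).card ≤ k - 1 := by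
        calc (negSupp n X).card ≤ ((Finset.Icc 1 (k - 1)).image (fun j => 2 * j)).card :=
              Finset.card_le_card hsub
          _ ≤ (Finset.Icc 1 (k - 1)).card := Finset.card_image_le
          _ = k - 1 := by simp
      omega
  · -- Part 2
    intro X hvals haltnum
    have hbdd : BddAbove {m : ℕ | ∃ l : List ℕ, l.length = m ∧ IsAltList n X l} := by
      refine ⟨n, ?_⟩
      rintro m ⟨l, rfl, hl⟩
      exact altList_len_le X l hl.2.2 n hl.1
    have hne : Set.Nonempty {m : ℕ | ∃ l : List ℕ, l.length = m ∧ IsAltList n X l} :=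
      ⟨0, [], rfl, ⟨by simp, by simp, List.isChain_nil⟩⟩
    have h2k : 2 * k ∈ {m : ℕ | ∃ l : List ℕ, l.length = m ∧ IsAltList n X l} := by
      have := Nat.sSup_mem hne hbdd
      rwa [show sSup {m : ℕ | ∃ l : List ℕ, l.length = m ∧ IsAltList n X l}
        = altNum n X from rfl, haltnum] at this
    obtain ⟨l, hlen, hl⟩ := h2k
    set g : ℕ → ℕ := fun i => l.getD i 0 with hg
    have hp : l.Pairwise (· < ·) :=
      List.isChain_iff_pairwise.mp (hl.2.2.imp (fun _ _ h => h.1))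
    have hgetmem : ∀ i, i < l.length → g i ∈ l := by
      intro i h
      rw [hg]; simp only
      rw [List.getD_eq_get l 0 ⟨_, h⟩]
      exact List.get_mem l ⟨i, h⟩
    have hmem : ∀ i, i < l.length → g i ∈ Finset.Icc 1 n :=
      fun i h => hl.1 _ (hgetmem i h)
    have hgap : ∀ i d, i + d < l.length → g i + d ≤ g (i + d) :=
      fun i d h => getD_gap l hp i d h
    have hpm : ∀ a ∈ l, X a = 1 ∨ X a = -1 := by
      intro a ha
      rcases hvals a (hl.1 a ha) with h | h | h
      · right; exact h
      · exact absurd h (hl.2.1 a ha)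
      · left; exact h
    have hsign : ∀ i, i < l.length → X (g i) = X (g 0) * (-1) ^ i := by
      intro i
      induction i with
      | zero => intro _; simp
      | succ i ih =>
        intro h
        have h1 : i < l.length := by omega
        have ihv := ih h1
        have hch := List.isChain_iff_getElem.mp hl.2.2 i (by omega)
        have e1 : g i = l.get ⟨i, h1⟩ := List.getD_eq_get l 0 ⟨_, h1⟩
        have e2 : g (i + 1) = l.get ⟨i + 1, h⟩ := List.getD_eq_get l 0 ⟨_, h⟩
        have hprod : X (g i) * X (g (i + 1)) < 0 := by
          rw [e1, e2]; exact hch.2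
        have hneg : X (g (i + 1)) = -X (g i) := by
          rcases hpm (g i) (hgetmem i h1) with ha | ha <;>
            rcases hpm (g (i + 1)) (hgetmem (i + 1) h) with hb | hb <;>
              rw [ha, hb] at hprod ⊢ <;> omega
        rw [hneg, ihv, pow_succ]; ring
    have hglb : ∀ i, i < l.length → 1 ≤ g i ∧ g i ≤ n := by
      intro i h
      have := hmem i h
      simpa [Finset.mem_Icc] using this
    have hmono : ∀ i j, i < j → j < l.length → g i < g j := by
      intro i j hij hj
      have := hgap i (j - i) (by omega)
      have he : i + (j - i) = j := by omega
      rw [he] at this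
      omega
    have hn2 : 2 ≤ n := by omega
    have main : ∀ p : ℕ, p ≤ 1 → ∃ S : Finset ℕ, S.card = k ∧ TwoStableSet n S ∧
        ∀ a ∈ S, a ∈ Finset.Icc 1 n ∧ X a = X (g 0) * (-1) ^ p := by
      intro p hp1
      have hidx : ∀ i, i < k → 2 * i + p < l.length := by intro i hi; omega
      refine ⟨(Finset.range k).image (fun i => g (2 * i + p)), ?_, ?_, ?_⟩
      · rw [Finset.card_image_of_injOn, Finset.card_range]
        intro i hi j hj hij
        simp only [Finset.mem_coe, Finset.mem_range] at hi hj
        dsimp only at hij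
        by_contra hne'
        rcases Nat.lt_or_ge i j with h' | h'
        · have := hmono (2 * i + p) (2 * j + p) (by omega) (hidx j hj)
          omega
        · have h'' : j < i := by omega
          have := hmono (2 * j + p) (2 * i + p) (by omega) (hidx i hi)
          omega
      · apply twoStable_of_nat n _ hn2
        · intro a ha
          simp only [Finset.mem_image, Finset.mem_range] at ha
          obtain ⟨i, hi, rfl⟩ := ha
          exact hmem _ (hidx i hi)
        · intro a ha b hb hab
          simp only [Finset.mem_image, Finset.mem_range] at ha hb
          obtain ⟨i, hi, rfl⟩ := ha
          obtain ⟨j, hj, rfl⟩ := hb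
          beta_reduce at hab ⊢
          have hij : i < j := by
            by_contra hc
            rcases Nat.lt_or_ge j i with h' | h'
            · have := hmono (2 * j + p) (2 * i + p) (by omega) (hidx i hi)
              omega
            · have he' : i = j := by omega
              rw [he'] at hab
              exact lt_irrefl _ hab
          constructor
          · have h1 := hgap (2 * i + p) (2 * (j - i)) (by omega)
            have he : 2 * i + p + 2 * (j - i) = 2 * j + p := by omega
            rw [he] at h1
            omega
          · have h2 := hgap (2 * j + p) (2 * k - 1 - (2 * j + p)) (by omega)
            have he2 : 2 * j + p + (2 * k - 1 - (2 * j + p)) = 2 * k - 1 := by omega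
            rw [he2] at h2
            have h3 := hgap 0 (2 * i + p) (by omega)
            simp only [Nat.zero_add] at h3
            have h4 := (hglb 0 (by omega)).1
            have h5 := (hglb (2 * k - 1) (by omega)).2
            omega
      · intro a ha
        simp only [Finset.mem_image, Finset.mem_range] at ha
        obtain ⟨i, hi, rfl⟩ := ha
        refine ⟨hmem _ (hidx i hi), ?_⟩
        rw [hsign _ (hidx i hi)]
        congr 1
        rw [pow_add, pow_mul]
        norm_num
    obtain ⟨S0, hS0card, hS0ts, hS0v⟩ := main 0 (by omega)
    obtain ⟨S1, hS1card, hS1ts, hS1v⟩ := main 1 (by omega)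
    have hg0 : X (g 0) = 1 ∨ X (g 0) = -1 := hpm (g 0) (hgetmem 0 (by omega))
    rcases hg0 with hs | hs
    · constructor
      · refine ⟨S0, ?_, hS0card, hS0ts⟩
        intro a ha
        obtain ⟨h1, h2⟩ := hS0v a ha
        simp only [posSupp, Finset.mem_filter]
        exact ⟨h1, by rw [h2, hs]; norm_num⟩
      · refine ⟨S1, ?_, hS1card, hS1ts⟩
        intro a ha
        obtain ⟨h1, h2⟩ := hS1v a ha
        simp only [negSupp, Finset.mem_filter]
        exact ⟨h1, by rw [h2, hs]; norm_num⟩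
    · constructor
      · refine ⟨S1, ?_, hS1card, hS1ts⟩
        intro a ha
        obtain ⟨h1, h2⟩ := hS1v a ha
        simp only [posSupp, Finset.mem_filter]
        exact ⟨h1, by rw [h2, hs]; norm_num⟩
      · refine ⟨S0, ?_, hS0card, hS0ts⟩
        intro a ha
        obtain ⟨h1, h2⟩ := hS0v a ha
        simp only [negSupp, Finset.mem_filter]
        exact ⟨h1, by rw [h2, hs]; norm_num⟩
end

section
/- For positive integers m, n, k with n ≥ 2k: χ_m(KG(n,k)) ≤ ⌈m/k⌉(n − 2k) + 2m, where χ_m is the m-th multichromatic number. -/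
/-- The `m`-th multichromatic number: the least `C` such that `G` admits a
homomorphism to `KG(C,m)` (an `m`-fold `C`-coloring). -/
noncomputable def multiChrom {V : Type*} (G : SimpleGraph V) (m : ℕ) : ℕ :=
  sInf {C : ℕ | Nonempty (G →g kneserGraph C m)}

open Finset

variable {n : ℕ}

/-- restrict a finset of `Fin (n+2)` to `Fin n`. -/
def restr (A : Finset (Fin (n+2))) : Finset (Fin n) :=
  Finset.univ.filter (fun b : Fin n => Fin.castLE (by omega) b ∈ A)

lemma mem_restr {A : Finset (Fin (n+2))} {b : Fin n} :
    b ∈ restr A ↔ Fin.castLE (by omega) b ∈ A := by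
  simp [restr]

lemma map_restr (A : Finset (Fin (n+2))) :
    (restr A).map (Fin.castLEEmb (by omega)) = A.filter (fun a : Fin (n+2) => (a : ℕ) < n) := by
  ext a
  simp only [Finset.mem_map, mem_restr, Fin.castLEEmb_apply, Finset.mem_filter]
  constructor
  · rintro ⟨b, hb, rfl⟩
    exact ⟨hb, b.isLt⟩
  · rintro ⟨ha, hlt⟩
    exact ⟨⟨a.1, hlt⟩, ha, rfl⟩

lemma card_restr (A : Finset (Fin (n+2))) :
    (restr A).card = (A.filter (fun a : Fin (n+2) => (a : ℕ) < n)).card := by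
  rw [← map_restr, Finset.card_map]

lemma high_card_le (A : Finset (Fin (n+2))) :
    (A.filter (fun a : Fin (n+2) => ¬ (a : ℕ) < n)).card ≤ 2 := by
  have hsub : A.filter (fun a : Fin (n+2) => ¬ (a : ℕ) < n) ⊆
      {(⟨n, by omega⟩ : Fin (n+2)), ⟨n+1, by omega⟩} := by
    intro a ha
    simp only [Finset.mem_filter] at ha
    have := a.isLt
    simp only [Finset.mem_insert, Finset.mem_singleton, Fin.ext_iff]
    omega
  calc _ ≤ _ := Finset.card_le_card hsub
    _ ≤ 2 := Finset.card_insert_le _ _ |>.trans (by simp)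

lemma card_restr_add (A : Finset (Fin (n+2))) :
    (restr A).card + (A.filter (fun a : Fin (n+2) => ¬ (a : ℕ) < n)).card = A.card := by
  rw [card_restr, Finset.card_filter_add_card_filter_not]

lemma restr_disj {A B : Finset (Fin (n+2))} (h : Disjoint A B) :
    Disjoint (restr A) (restr B) := by
  rw [Finset.disjoint_left] at h ⊢
  intro b hb hb'
  exact h (mem_restr.mp hb) (mem_restr.mp hb')
/-- number of "high" elements. -/
def hc (A : Finset (Fin (n+2))) : ℕ :=
  (A.filter (fun a : Fin (n+2) => ¬ (a : ℕ) < n)).card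

lemma hc_le (A : Finset (Fin (n+2))) : hc A ≤ 2 := high_card_le A

lemma card_restr_add' (A : Finset (Fin (n+2))) :
    (restr A).card + hc A = A.card := card_restr_add A

/-- The step map for the homomorphism `KG(n+2,k) → KG(n,k-1)`. -/
def stepMap (A : Finset (Fin (n+2))) : Finset (Fin n) :=
  if hc A = 0 then
    (if h : (restr A).Nonempty then (restr A).erase ((restr A).min' h) else restr A)
  else if hc A = 1 then restr A
  else (if h : (restr A)ᶜ.Nonempty then insert ((restr A)ᶜ.min' h) (restr A) else restr A)

lemma card_stepMap {k : ℕ} (hk : 2 ≤ k) (hn : 2 * k ≤ n + 2)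
    (A : Finset (Fin (n+2))) (hA : A.card = k) :
    (stepMap A).card = k - 1 := by
  have hadd := card_restr_add' A
  have hle := hc_le A
  rw [hA] at hadd
  unfold stepMap
  split_ifs with h0 h1 h1' h2
  · rw [Finset.card_erase_of_mem (Finset.min'_mem _ _)]
    omega
  · rw [Finset.not_nonempty_iff_eq_empty] at h1
    rw [h1] at hadd
    simp at hadd
    omega
  · omega
  · rw [Finset.card_insert_of_notMem (by
      have := Finset.min'_mem ((restr A)ᶜ) h2
      simpa [Finset.mem_compl] using this)]
    omega
  · exfalso
    rw [Finset.not_nonempty_iff_eq_empty, Finset.compl_eq_empty_iff] at h2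
    have : (restr A).card = n := by rw [h2]; simp
    omega
lemma stepMap_of_hc0 {A : Finset (Fin (n+2))} (h0 : hc A = 0) (hne : (restr A).Nonempty) :
    stepMap A = (restr A).erase ((restr A).min' hne) := by
  unfold stepMap
  rw [if_pos h0, dif_pos hne]

lemma stepMap_of_hc2 {A : Finset (Fin (n+2))} (h2 : hc A = 2) (hne : (restr A)ᶜ.Nonempty) :
    stepMap A = insert ((restr A)ᶜ.min' hne) (restr A) := by
  unfold stepMap
  rw [if_neg (by omega), if_neg (by omega), dif_pos hne]

lemma stepMap_subset {A : Finset (Fin (n+2))} (h : hc A ≤ 1) : stepMap A ⊆ restr A := by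
  unfold stepMap
  split_ifs with h0 h1 h1' h2
  · exact Finset.erase_subset _ _
  · exact subset_rfl
  · exact subset_rfl
  · omega
  · omega

lemma hc_sum_le {A B : Finset (Fin (n+2))} (hAB : Disjoint A B) : hc A + hc B ≤ 2 := by
  have hdf : Disjoint (A.filter (fun a : Fin (n+2) => ¬ (a : ℕ) < n))
      (B.filter (fun a : Fin (n+2) => ¬ (a : ℕ) < n)) :=
    hAB.mono (Finset.filter_subset _ _) (Finset.filter_subset _ _)
  have hsub : (A.filter (fun a : Fin (n+2) => ¬ (a : ℕ) < n)) ∪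
      (B.filter (fun a : Fin (n+2) => ¬ (a : ℕ) < n)) ⊆
      {(⟨n, by omega⟩ : Fin (n+2)), ⟨n+1, by omega⟩} := by
    intro a ha
    simp only [Finset.mem_union, Finset.mem_filter] at ha
    have := a.isLt
    simp only [Finset.mem_insert, Finset.mem_singleton, Fin.ext_iff]
    omega
  have := Finset.card_le_card hsub
  rw [Finset.card_union_of_disjoint hdf] at this
  calc hc A + hc B ≤ _ := this
    _ ≤ 2 := Finset.card_insert_le _ _ |>.trans (by simp)

lemma stepMap_disj_aux {k : ℕ} (hk : 2 ≤ k) (hn : 2 * k ≤ n + 2)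
    {A B : Finset (Fin (n+2))} (hA : A.card = k) (hB : B.card = k)
    (hAB : Disjoint A B) (h2 : hc A = 2) (h0 : hc B = 0) :
    Disjoint (stepMap A) (stepMap B) := by
  have haddA := card_restr_add' A
  have haddB := card_restr_add' B
  rw [hA] at haddA; rw [hB] at haddB
  have hneA : (restr A)ᶜ.Nonempty := by
    rw [← Finset.card_pos, Finset.card_compl]
    simp only [Fintype.card_fin]
    omega
  have hneB : (restr B).Nonempty := by
    rw [← Finset.card_pos]
    omega
  rw [stepMap_of_hc2 h2 hneA, stepMap_of_hc0 h0 hneB]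
  have hdr := restr_disj hAB
  rw [Finset.disjoint_left]
  intro a ha ha'
  rcases Finset.mem_insert.mp ha with h | haA
  · -- a is the min of (restr A)ᶜ
    have haB : a ∈ restr B := Finset.mem_of_mem_erase ha'
    have hne : a ≠ (restr B).min' hneB := Finset.ne_of_mem_erase ha'
    have h1 : (restr B).min' hneB ≤ a := Finset.min'_le _ _ haB
    have hBsub : restr B ⊆ (restr A)ᶜ := by
      intro b hb
      rw [Finset.mem_compl]
      exact fun hbA => Finset.disjoint_left.mp hdr hbA hb
    have h2' : a ≤ (restr B).min' hneB := h ▸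
      Finset.min'_le _ _ (hBsub (Finset.min'_mem _ _))
    exact hne (le_antisymm h2' h1)
  · exact Finset.disjoint_left.mp hdr haA (Finset.mem_of_mem_erase ha')

lemma stepMap_disj {k : ℕ} (hk : 2 ≤ k) (hn : 2 * k ≤ n + 2)
    {A B : Finset (Fin (n+2))} (hA : A.card = k) (hB : B.card = k)
    (hAB : Disjoint A B) : Disjoint (stepMap A) (stepMap B) := by
  have hsum := hc_sum_le hAB
  by_cases h2A : hc A = 2
  · have h0B : hc B = 0 := by omega
    exact stepMap_disj_aux hk hn hA hB hAB h2A h0B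
  · by_cases h2B : hc B = 2
    · have h0A : hc A = 0 := by omega
      exact (stepMap_disj_aux hk hn hB hA hAB.symm h2B h0A).symm
    · exact (restr_disj hAB).mono (stepMap_subset (by omega)) (stepMap_subset (by omega))
lemma ne_of_disj_pos {N m : ℕ} (hm : 0 < m) {A B : {s : Finset (Fin N) // s.card = m}}
    (h : Disjoint A.1 B.1) : A ≠ B := by
  intro he
  subst he
  rw [disjoint_self] at h
  have := A.2
  rw [h] at this
  simp at this
  omega

/-- cast a hom along equalities of the Kneser parameters (target). -/
def homCast {V : Type*} {G : SimpleGraph V} {n k n' k' : ℕ} (hn : n = n') (hk : k = k')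
    (f : G →g kneserGraph n k) : G →g kneserGraph n' k' := by
  subst hn; subst hk; exact f

/-- cast a hom along equalities of the Kneser parameters (source). -/
def homCastSrc {V : Type*} {G : SimpleGraph V} {n k n' k' : ℕ} (hn : n = n') (hk : k = k')
    (f : kneserGraph n k →g G) : kneserGraph n' k' →g G := by
  subst hn; subst hk; exact f

/-- The step homomorphism `KG(n+2,k) → KG(n,k-1)`. -/
def stepHom {n k : ℕ} (hk : 2 ≤ k) (hn : 2 * k ≤ n + 2) :
    kneserGraph (n+2) k →g kneserGraph n (k-1) where
  toFun A := ⟨stepMap A.1, card_stepMap hk hn A.1 A.2⟩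
  map_rel' := by
    rintro A B (⟨hne, hdis⟩ : A ≠ B ∧ Disjoint A.1 B.1)
    have hd := stepMap_disj hk hn A.2 B.2 hdis
    exact ⟨ne_of_disj_pos (by omega) hd, hd⟩

lemma iterHom {n k : ℕ} (hn : 2 * k ≤ n) :
    ∀ (d : ℕ), d < k → Nonempty (kneserGraph n k →g kneserGraph (n - 2*d) (k - d))
  | 0, _ => ⟨homCast (by omega) (by omega) SimpleGraph.Hom.id⟩
  | d+1, hd => by
    obtain ⟨f⟩ := iterHom hn d (by omega)
    have g := stepHom (n := n - 2*d - 2) (k := k - d) (by omega) (by omega)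
    exact ⟨homCast (by omega) (by omega)
      (g.comp (homCast (by omega) (by omega) f))⟩
/-- combine two multifold colorings. -/
def sumHom {V : Type*} {G : SimpleGraph V} {C₁ m₁ C₂ m₂ : ℕ} (hm : 0 < m₁ + m₂)
    (f : G →g kneserGraph C₁ m₁) (g : G →g kneserGraph C₂ m₂) :
    G →g kneserGraph (C₁ + C₂) (m₁ + m₂) where
  toFun v := ⟨((f v).1.map (Fin.castAddEmb C₂)) ∪ ((g v).1.map (Fin.natAddEmb C₁)), by
    rw [Finset.card_union_of_disjoint, Finset.card_map, Finset.card_map, (f v).2, (g v).2]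
    rw [Finset.disjoint_left]
    rintro a ha ha'
    simp only [Finset.mem_map, Fin.castAddEmb, Fin.natAddEmb] at ha ha'
    obtain ⟨b, _, rfl⟩ := ha
    obtain ⟨c, _, hc⟩ := ha'
    have h1 : ((Fin.castLEEmb (Nat.le_add_right C₁ C₂)) b : ℕ) < C₁ := b.isLt
    have h2 : (C₁ : ℕ) ≤ ((Fin.castLEEmb (Nat.le_add_right C₁ C₂)) b : ℕ) := by
      rw [← hc]; exact Nat.le_add_right C₁ c
    omega⟩
  map_rel' := by
    rintro u v huv
    have hf : f u ≠ f v ∧ Disjoint (f u).1 (f v).1 := f.map_rel' huv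
    have hg : g u ≠ g v ∧ Disjoint (g u).1 (g v).1 := g.map_rel' huv
    have hdis : Disjoint
        (((f u).1.map (Fin.castAddEmb C₂)) ∪ ((g u).1.map (Fin.natAddEmb C₁)))
        (((f v).1.map (Fin.castAddEmb C₂)) ∪ ((g v).1.map (Fin.natAddEmb C₁))) := by
      have hcross : ∀ (s : Finset (Fin C₁)) (t : Finset (Fin C₂)),
          Disjoint (s.map (Fin.castAddEmb C₂)) (t.map (Fin.natAddEmb C₁)) := by
        intro s t
        rw [Finset.disjoint_left]
        rintro a ha ha'
        simp only [Finset.mem_map, Fin.castAddEmb, Fin.natAddEmb] at ha ha'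
        obtain ⟨b, _, rfl⟩ := ha
        obtain ⟨c, _, hc⟩ := ha'
        have h1 : ((Fin.castLEEmb (Nat.le_add_right C₁ C₂)) b : ℕ) < C₁ := b.isLt
        have h2 : (C₁ : ℕ) ≤ ((Fin.castLEEmb (Nat.le_add_right C₁ C₂)) b : ℕ) := by
          rw [← hc]; exact Nat.le_add_right C₁ c
        omega
      rw [Finset.disjoint_union_left, Finset.disjoint_union_right,
        Finset.disjoint_union_right]
      refine ⟨⟨(Finset.disjoint_map _).2 hf.2, hcross _ _⟩,
        ⟨(hcross _ _).symm, (Finset.disjoint_map _).2 hg.2⟩⟩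
    exact ⟨ne_of_disj_pos hm hdis, hdis⟩

/-- repeat a coloring `j` extra times. -/
lemma repHom {n k D r : ℕ} (hkr : 0 < k + r) (base : kneserGraph n k →g kneserGraph D r) :
    ∀ (j : ℕ), Nonempty (kneserGraph n k →g kneserGraph (j*n + D) (j*k + r))
  | 0 => ⟨homCast (by omega) (by omega) base⟩
  | j+1 => by
    obtain ⟨f⟩ := repHom hkr base j
    exact ⟨homCast (by ring) (by ring) (sumHom (by omega) SimpleGraph.Hom.id f)⟩
theorem stmt_12 (n k m : ℕ) (hm : 0 < m) (hk : 0 < k) (h : 2 * k ≤ n) :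
    multiChrom (kneserGraph n k) m ≤ (m + k - 1) / k * (n - 2 * k) + 2 * m := by
  set q := (m - 1) / k with hq
  set s := (m - 1) % k with hs
  have hsk : s < k := Nat.mod_lt _ hk
  have hdm : k * q + s = m - 1 := Nat.div_add_mod (m - 1) k
  have hm' : m = k * q + s + 1 := by rw [hdm]; omega
  have ht : (m + k - 1) / k = q + 1 := by
    rw [hq, show m + k - 1 = (m - 1) + k by omega, Nat.add_div_right _ hk]
  obtain ⟨f⟩ := iterHom h (k - (s + 1)) (by omega)
  have base : kneserGraph n k →g kneserGraph (n - 2 * (k - (s + 1))) (s + 1) :=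
    homCast rfl (by omega) f
  obtain ⟨g⟩ := repHom (by omega) base q
  have key1 : q * n + (n - 2 * (k - (s + 1))) = (m + k - 1) / k * (n - 2 * k) + 2 * m := by
    rw [ht]
    have c1 : s + 1 ≤ k := hsk
    have c3 : 2 * (k - (s + 1)) ≤ n := by omega
    have hm'' : (m : ℤ) = k * q + s + 1 := by exact_mod_cast hm'
    zify [c1, h, c3]
    linear_combination (-2 : ℤ) * hm''
  have key2 : q * k + (s + 1) = m := by
    rw [mul_comm, ← add_assoc, hdm]; omega
  unfold multiChrom
  apply Nat.sInf_le
  exact ⟨homCast key1 key2 g⟩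
end

section
/- The Schrijver graph SG(2k+1, k), whose vertices are the 2-stable k-subsets of [2k+1] with disjointness as adjacency, has chromatic number 3. -/
/-- `S ⊆ Fin n` is `s`-stable if any two distinct elements are at distance at
least `s` and at most `n - s`. -/
def SStable (n s : ℕ) (S : Finset (Fin n)) : Prop :=
  ∀ i ∈ S, ∀ j ∈ S, i ≠ j →
    (s : ℤ) ≤ |(i.val : ℤ) - (j.val : ℤ)| ∧ |(i.val : ℤ) - (j.val : ℤ)| ≤ (n : ℤ) - s

/-- The `s`-stable Kneser graph; for `s = 2` this is the Schrijver graph. -/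
def stableKneser (n k s : ℕ) :
    SimpleGraph {S : Finset (Fin n) // S.card = k ∧ SStable n s S} where
  Adj A B := A ≠ B ∧ Disjoint A.1 B.1
  symm := ⟨fun _ _ ⟨h1, h2⟩ => ⟨h1.symm, h2.symm⟩⟩
  loopless := ⟨fun _ ⟨h, _⟩ => h rfl⟩

open Fin.CommRing

def sgT (k : ℕ) (r : Fin (2*k+1)) : Finset (Fin (2*k+1)) :=
  (Finset.range k).image (fun i => r + ((2*i : ℕ) : Fin (2*k+1)))

lemma mem_sgT {k : ℕ} {r x : Fin (2*k+1)} :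
    x ∈ sgT k r ↔ ∃ i < k, r + ((2*i : ℕ) : Fin (2*k+1)) = x := by
  simp [sgT, Finset.mem_image]

lemma card_sgT (k : ℕ) (r : Fin (2*k+1)) : (sgT k r).card = k := by
  rw [sgT, Finset.card_image_of_injOn, Finset.card_range]
  intro i hi j hj hij
  simp only [Finset.mem_coe, Finset.mem_range] at hi hj
  have h := add_left_cancel hij
  have h2 : (2*i) % (2*k+1) = (2*j) % (2*k+1) := by
    rw [← Fin.val_natCast, ← Fin.val_natCast, h]
  rw [Nat.mod_eq_of_lt (by omega), Nat.mod_eq_of_lt (by omega)] at h2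
  omega

lemma val_one_eq {k : ℕ} (hk : 1 ≤ k) : (1 : Fin (2*k+1)).val = 1 := by
  rw [Fin.val_one']
  exact Nat.mod_eq_of_lt (by omega)

lemma val_add_one {k : ℕ} (hk : 1 ≤ k) (x : Fin (2*k+1)) :
    (x + 1).val = (x.val + 1) % (2*k+1) := by
  rw [Fin.val_add, val_one_eq hk]

lemma sstable_iff {k : ℕ} (hk : 1 ≤ k) (S : Finset (Fin (2*k+1))) :
    SStable (2*k+1) 2 S ↔ ∀ x ∈ S, x + 1 ∉ S := by
  have hsucc : ∀ i j : Fin (2*k+1), j.val = (i.val + 1) % (2*k+1) → j = i + 1 := by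
    intro i j h
    apply Fin.ext
    rw [val_add_one hk, h]
  constructor
  · intro hst x hx hx1
    have hval : (x+1).val = (x.val + 1) % (2*k+1) := val_add_one hk x
    have hlt := x.isLt
    have hne : x ≠ x + 1 := by
      intro h
      have hx' := congrArg Fin.val h
      rw [hval] at hx'
      rcases Nat.lt_or_ge (x.val + 1) (2*k+1) with h' | h'
      · rw [Nat.mod_eq_of_lt h'] at hx'; omega
      · have h2k : x.val + 1 = 2*k+1 := by omega
        rw [h2k, Nat.mod_self] at hx'; omega
    obtain ⟨h2, h3⟩ := hst x hx (x+1) hx1 hne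
    rcases Nat.lt_or_ge (x.val + 1) (2*k+1) with h' | h'
    · rw [Nat.mod_eq_of_lt h'] at hval
      rcases abs_cases ((x.val : ℤ) - ((x+1).val : ℤ)) with ⟨he, _⟩ | ⟨he, _⟩ <;>
        rw [he] at h2 h3 <;> push_cast at h2 h3 <;> omega
    · have h2k : x.val + 1 = 2*k+1 := by omega
      rw [h2k, Nat.mod_self] at hval
      rcases abs_cases ((x.val : ℤ) - ((x+1).val : ℤ)) with ⟨he, _⟩ | ⟨he, _⟩ <;>
        rw [he] at h2 h3 <;> push_cast at h2 h3 <;> omega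
  · intro h i hi j hj hne
    have hvne : i.val ≠ j.val := fun hv => hne (Fin.ext hv)
    have hi1 : (i.val + 1) % (2*k+1) ≠ j.val := by
      intro hc
      exact h i hi (hsucc i j hc.symm ▸ hj)
    have hj1 : (j.val + 1) % (2*k+1) ≠ i.val := by
      intro hc
      exact h j hj (hsucc j i hc.symm ▸ hi)
    have hli := i.isLt; have hlj := j.isLt
    have d1 : j.val ≠ i.val + 1 := by
      intro hc; apply hi1; rw [Nat.mod_eq_of_lt (by omega), hc]
    have d2 : i.val ≠ j.val + 1 := by
      intro hc; apply hj1; rw [Nat.mod_eq_of_lt (by omega), hc]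
    have d3 : ¬ (i.val = 2*k ∧ j.val = 0) := by
      rintro ⟨ha, hb⟩
      apply hi1
      rw [ha, hb, show 2*k+1 = (2*k+1)*1 by ring]
      exact Nat.mod_self _
    have d4 : ¬ (j.val = 2*k ∧ i.val = 0) := by
      rintro ⟨ha, hb⟩
      apply hj1
      rw [ha, hb, show 2*k+1 = (2*k+1)*1 by ring]
      exact Nat.mod_self _
    rcases abs_cases ((i.val : ℤ) - (j.val : ℤ)) with ⟨he, _⟩ | ⟨he, _⟩ <;>
      rw [he] <;> push_cast <;> omega

/-- sgT satisfies the "no consecutive" property. -/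
lemma sgT_succ {k : ℕ} (r : Fin (2*k+1)) : ∀ x ∈ sgT k r, x + 1 ∉ sgT k r := by
  intro x hx hx1
  obtain ⟨i, hi, rfl⟩ := mem_sgT.mp hx
  obtain ⟨j, hj, hEq⟩ := mem_sgT.mp hx1
  rw [add_assoc] at hEq
  have h := add_left_cancel hEq
  have h2 : (2*j) % (2*k+1) = (2*i+1) % (2*k+1) := by
    have : ((2*j : ℕ) : Fin (2*k+1)) = ((2*i+1 : ℕ) : Fin (2*k+1)) := by
      rw [h]; push_cast; ring
    have := congrArg Fin.val this
    rwa [Fin.val_natCast, Fin.val_natCast] at this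
  rw [Nat.mod_eq_of_lt (by omega), Nat.mod_eq_of_lt (by omega)] at h2
  omega

/-- every 2-stable k-set is some sgT -/
lemma classify {k : ℕ} (hk : 1 ≤ k) {S : Finset (Fin (2*k+1))} (hcard : S.card = k)
    (hst : ∀ x ∈ S, x + 1 ∉ S) : ∃ r, S = sgT k r := by
  classical
  set U := S ∪ S.image (· + 1) with hU
  have hdisj : Disjoint S (S.image (· + 1)) := by
    rw [Finset.disjoint_left]
    intro a ha hmem
    obtain ⟨x, hx, rfl⟩ := Finset.mem_image.mp hmem
    exact hst x hx ha
  have hcardU : U.card = 2*k := by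
    rw [hU, Finset.card_union_of_disjoint hdisj,
      Finset.card_image_of_injective _ (add_left_injective _), hcard]
    omega
  have hcardC : Uᶜ.card = 1 := by
    rw [Finset.card_compl, hcardU]
    simp
  obtain ⟨z, hz⟩ := Finset.card_eq_one.mp hcardC
  have hzU : ∀ x : Fin (2*k+1), x ≠ z → x ∈ S ∨ ∃ y ∈ S, y + 1 = x := by
    intro x hx
    have : x ∈ U := by
      by_contra hc
      have : x ∈ Uᶜ := Finset.mem_compl.mpr hc
      rw [hz, Finset.mem_singleton] at this
      exact hx this
    rcases Finset.mem_union.mp this with h | h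
    · left; exact h
    · right
      obtain ⟨y, hy, hyx⟩ := Finset.mem_image.mp h
      exact ⟨y, hy, hyx⟩
  have hzS : z ∉ S := by
    intro hc
    have : z ∈ Uᶜ := by rw [hz]; exact Finset.mem_singleton_self z
    exact (Finset.mem_compl.mp this) (Finset.mem_union_left _ hc)
  -- key induction
  have hmem : ∀ j : ℕ, 1 ≤ j → j ≤ 2*k → (z + (j : Fin (2*k+1)) ∈ S ↔ Odd j) := by
    intro j hj1
    induction j, hj1 using Nat.le_induction with
    | base =>
      intro _
      simp only [Nat.cast_one]
      constructor
      · intro _; exact odd_one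
      · intro _
        have hne : z + 1 ≠ z := by
          intro hc
          have : (1 : Fin (2*k+1)) = 0 := by
            have := add_left_cancel (hc.trans (add_zero z).symm)
            exact this
          have := congrArg Fin.val this
          rw [Fin.val_one', Nat.mod_eq_of_lt (by omega)] at this
          simp at this
        rcases hzU (z+1) hne with h | ⟨y, hy, hyx⟩
        · exact h
        · have : y = z := add_right_cancel hyx
          exact absurd (this ▸ hy) hzS
    | succ j hj IH =>
      intro hj2
      have IH' := IH (by omega)
      have hcast : ((j+1 : ℕ) : Fin (2*k+1)) = ((j:ℕ) : Fin (2*k+1)) + 1 := by push_cast; ring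
      rw [hcast, ← add_assoc]
      by_cases hodd : Odd j
      · have hjS := IH'.mpr hodd
        have : z + (j : Fin (2*k+1)) + 1 ∉ S := hst _ hjS
        constructor
        · intro hc; exact absurd hc this
        · intro hc; exact absurd hc (by simp [Nat.odd_add_one, hodd])
      · have hjS : z + (j : Fin (2*k+1)) ∉ S := fun hc => hodd (IH'.mp hc)
        have hne : z + (j : Fin (2*k+1)) + 1 ≠ z := by
          intro hc
          have h0 : ((j : ℕ) : Fin (2*k+1)) + 1 = 0 := by
            have := hc.trans (add_zero z).symm
            rw [add_assoc] at this
            exact add_left_cancel this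
          have h1 : ((j+1 : ℕ) : Fin (2*k+1)) = 0 := by rw [hcast, h0]
          have := congrArg Fin.val h1
          rw [Fin.val_natCast, Nat.mod_eq_of_lt (by omega)] at this
          simp at this
        constructor
        · intro _; exact (Nat.not_odd_iff_even.mp hodd).add_one
        · intro _
          rcases hzU _ hne with h | ⟨y, hy, hyx⟩
          · exact h
          · have : y = z + (j : Fin (2*k+1)) := add_right_cancel hyx
            exact absurd (this ▸ hy) hjS
  refine ⟨z + 1, ?_⟩
  have hsub : sgT k (z+1) ⊆ S := by
    intro x hx
    obtain ⟨i, hi, rfl⟩ := mem_sgT.mp hx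
    have : z + 1 + ((2*i : ℕ) : Fin (2*k+1)) = z + ((2*i+1 : ℕ) : Fin (2*k+1)) := by
      push_cast; ring
    rw [this]
    exact (hmem (2*i+1) (by omega) (by omega)).mpr ⟨i, by ring⟩
  exact (Finset.eq_of_subset_of_card_le hsub (by rw [hcard, card_sgT])).symm

/-- adjacency: disjoint sgT's must have offsets differing by 1 -/
lemma adj_sgT {k : ℕ} (hk : 1 ≤ k) {r r' : Fin (2*k+1)} (hne : r ≠ r')
    (hd : Disjoint (sgT k r) (sgT k r')) : r' = r + 1 ∨ r = r' + 1 := by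
  by_contra hcon
  push_neg at hcon
  obtain ⟨h1, h2⟩ := hcon
  set m := (r' - r).val with hm
  have hrr : r' = r + ((m : ℕ) : Fin (2*k+1)) := by
    rw [hm, Fin.cast_val_eq_self]; ring
  have hmlt : m < 2*k+1 := (r' - r).isLt
  have hm0 : m ≠ 0 := by
    intro hc
    apply hne
    rw [hrr, hc]
    simp
  have hm1 : m ≠ 1 := by
    intro hc
    apply h1
    rw [hrr, hc]
    norm_num
  have hm2k : m ≠ 2*k := by
    intro hc
    apply h2
    rw [hrr, hc, add_assoc]
    have : ((2*k : ℕ) : Fin (2*k+1)) + 1 = 0 := by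
      have : (((2*k : ℕ) : Fin (2*k+1)) + 1) = ((2*k+1 : ℕ) : Fin (2*k+1)) := by push_cast; ring
      rw [this, Fin.natCast_self]
    rw [this, add_zero]
  rcases Nat.even_or_odd m with he | ho
  · obtain ⟨t, ht⟩ := he
    have ht' : m = 2*t := by omega
    have ht1 : 1 ≤ t := by omega
    have htk : t < k := by omega
    have hmem1 : r + ((2*t : ℕ) : Fin (2*k+1)) ∈ sgT k r := mem_sgT.mpr ⟨t, htk, rfl⟩
    have hmem2 : r + ((2*t : ℕ) : Fin (2*k+1)) ∈ sgT k r' := by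
      apply mem_sgT.mpr ⟨0, by omega, ?_⟩
      rw [hrr, ht']
      push_cast
      ring
    exact Finset.disjoint_left.mp hd hmem1 hmem2
  · obtain ⟨t, ht⟩ := ho
    set s := (2*k+1 - m)/2 with hs
    have hs2 : 2*s = 2*k+1 - m := by omega
    have hs1 : 1 ≤ s := by omega
    have hsk : s < k := by omega
    have hmem1 : r ∈ sgT k r := mem_sgT.mpr ⟨0, by omega, by simp⟩
    have hmem2 : r ∈ sgT k r' := by
      apply mem_sgT.mpr ⟨s, hsk, ?_⟩
      rw [hrr, add_assoc]
      have : ((m : ℕ) : Fin (2*k+1)) + ((2*s : ℕ) : Fin (2*k+1)) = ((m + 2*s : ℕ) : Fin (2*k+1)) := by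
        push_cast; ring
      rw [this, show m + 2*s = 2*k+1 by omega, Fin.natCast_self, add_zero]
    exact Finset.disjoint_left.mp hd hmem1 hmem2

lemma sgT_sstable {k : ℕ} (hk : 1 ≤ k) (r : Fin (2*k+1)) : SStable (2*k+1) 2 (sgT k r) :=
  (sstable_iff hk _).mpr (sgT_succ r)

def sgV {k : ℕ} (hk : 1 ≤ k) (r : Fin (2*k+1)) :
    {S : Finset (Fin (2*k+1)) // S.card = k ∧ SStable (2*k+1) 2 S} :=
  ⟨sgT k r, card_sgT k r, sgT_sstable hk r⟩

lemma disj_consec {k : ℕ} (hk : 1 ≤ k) (r : Fin (2*k+1)) :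
    Disjoint (sgT k r) (sgT k (r+1)) := by
  rw [Finset.disjoint_left]
  intro x hx hx1
  obtain ⟨i, hi, rfl⟩ := mem_sgT.mp hx
  obtain ⟨j, hj, hEq⟩ := mem_sgT.mp hx1
  have h : ((2*i : ℕ) : Fin (2*k+1)) = ((2*j+1 : ℕ) : Fin (2*k+1)) := by
    have : r + ((2*j+1 : ℕ) : Fin (2*k+1)) = r + ((2*i:ℕ) : Fin (2*k+1)) := by
      rw [← hEq]; push_cast; ring
    exact (add_left_cancel this).symm
  have h2 := congrArg Fin.val h
  rw [Fin.val_natCast, Fin.val_natCast, Nat.mod_eq_of_lt (by omega),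
    Nat.mod_eq_of_lt (by omega)] at h2
  omega

lemma adj_consec {k : ℕ} (hk : 1 ≤ k) (r : Fin (2*k+1)) :
    (stableKneser (2*k+1) k 2).Adj (sgV hk r) (sgV hk (r+1)) := by
  constructor
  · intro hc
    have hEq : sgT k r = sgT k (r+1) := congrArg Subtype.val hc
    have hmem : r ∈ sgT k r := mem_sgT.mpr ⟨0, by omega, by simp⟩
    exact Finset.disjoint_left.mp (disj_consec hk r) hmem (hEq ▸ hmem)
  · exact disj_consec hk r

lemma not_colorable_two {k : ℕ} (hk : 1 ≤ k) :
    ¬ (stableKneser (2*k+1) k 2).Colorable 2 := by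
  rintro ⟨C⟩
  have fin2 : ∀ a b : Fin 2, a ≠ b → a = b + 1 := by decide
  have step : ∀ j : ℕ,
      C (sgV hk ((j : ℕ) : Fin (2*k+1))) = C (sgV hk 0) + ((j : ℕ) : Fin 2) := by
    intro j
    induction j with
    | zero => simp
    | succ j IH =>
      have hcast : ((j+1 : ℕ) : Fin (2*k+1)) = ((j:ℕ) : Fin (2*k+1)) + 1 := by
        push_cast; ring
      have hadj := adj_consec hk ((j:ℕ) : Fin (2*k+1))
      have hne := C.valid hadj
      rw [← hcast] at hne
      have := fin2 _ _ hne.symm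
      rw [this, IH]
      push_cast
      ring
  have hfin := step (2*k+1)
  rw [Fin.natCast_self] at hfin
  have hone : ((2*k+1 : ℕ) : Fin 2) = 1 := by
    apply Fin.ext
    rw [Fin.val_natCast]
    omega
  rw [hone] at hfin
  have : (1 : Fin 2) = 0 := left_eq_add.mp hfin
  exact absurd this (by decide)

def sgF (k : ℕ) (r : Fin (2*k+1)) : Fin 3 :=
  if r.val = 2*k then 2 else if r.val % 2 = 0 then 0 else 1

lemma sgF_ne {k : ℕ} (hk : 1 ≤ k) (r : Fin (2*k+1)) : sgF k (r+1) ≠ sgF k r := by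
  have hval := val_add_one hk r
  have hlt := r.isLt
  unfold sgF
  rcases Nat.lt_or_ge (r.val+1) (2*k+1) with h | h
  · rw [Nat.mod_eq_of_lt h] at hval
    rw [hval]
    split_ifs <;> first | decide | (exfalso; omega)
  · have h2k : r.val = 2*k := by omega
    rw [h2k] at hval
    rw [show (2*k+1) % (2*k+1) = 0 from Nat.mod_self _] at hval
    rw [hval, h2k]
    split_ifs <;> first | decide | (exfalso; omega)

lemma colorable_three {k : ℕ} (hk : 1 ≤ k) :
    (stableKneser (2*k+1) k 2).Colorable 3 := by
  classical
  have key : ∀ A : {S : Finset (Fin (2*k+1)) // S.card = k ∧ SStable (2*k+1) 2 S},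
      ∃ r, A.1 = sgT k r := fun A =>
    classify hk A.2.1 ((sstable_iff hk _).mp A.2.2)
  refine ⟨SimpleGraph.Coloring.mk (fun A => sgF k (key A).choose) ?_⟩
  rintro A B ⟨hAB, hdisj⟩
  have hA := (key A).choose_spec
  have hB := (key B).choose_spec
  have hne : (key A).choose ≠ (key B).choose := by
    intro hc
    exact hAB (Subtype.ext (by rw [hA, hB, hc]))
  have hd : Disjoint (sgT k (key A).choose) (sgT k (key B).choose) := by
    rw [← hA, ← hB]; exact hdisj
  show sgF k (key A).choose ≠ sgF k (key B).choose
  rcases adj_sgT hk hne hd with h | h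
  · rw [h]; exact (sgF_ne hk _).symm
  · rw [h]; exact sgF_ne hk _

theorem stmt_16 (k : ℕ) (hk : 1 ≤ k) :
    (stableKneser (2 * k + 1) k 2).chromaticNumber = 3 := by
  refine le_antisymm (by exact_mod_cast (colorable_three hk).chromaticNumber_le) ?_
  have h : ¬ ((stableKneser (2*k+1) k 2).chromaticNumber ≤ 2) := by
    rw [show ((2:ℕ∞) = ((2:ℕ):ℕ∞)) by norm_num,
      SimpleGraph.chromaticNumber_le_iff_colorable]
    exact not_colorable_two hk
  calc (3:ℕ∞) = 2 + 1 := by norm_num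
    _ ≤ _ := Order.add_one_le_of_lt (not_le.mp h)
end

section
/- The Schrijver graph SG(n, 2) (n ≥ 4), whose vertices are the 2-stable 2-subsets of [n], has chromatic number n − 2. -/
instance (n s : ℕ) : DecidablePred (SStable n s) := fun _ => by
  unfold SStable; infer_instance

instance (n : ℕ) : Fintype {S : Finset (Fin n) // S.card = 2 ∧ SStable n 2 S} :=
  Subtype.fintype _
/-- If a family of stable pairs is intersecting and has no common element ("non-star"),
then there are `a b c` with all three pairs stable, and every member is inside `{a,b,c}`. -/
lemma triangle_lemma {n : ℕ} (hn : 1 ≤ n)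
    (𝒞 : Finset {S : Finset (Fin n) // S.card = 2 ∧ SStable n 2 S})
    (hint : ∀ A ∈ 𝒞, ∀ B ∈ 𝒞, ¬ Disjoint A.1 B.1)
    (hns : ∀ v : Fin n, ∃ A ∈ 𝒞, v ∉ A.1) :
    ∃ a b c : Fin n, a ≠ b ∧ b ≠ c ∧ a ≠ c ∧
      SStable n 2 {a, b} ∧ SStable n 2 {b, c} ∧ SStable n 2 {a, c} ∧
      ∀ E ∈ 𝒞, E.1 ⊆ {a, b, c} := by
  obtain ⟨A, hA, -⟩ := hns ⟨0, by omega⟩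
  obtain ⟨a, b, hab, hAeq⟩ := Finset.card_eq_two.mp A.2.1
  obtain ⟨B, hB, haB⟩ := hns a
  obtain ⟨x, hxA, hxB⟩ := Finset.not_disjoint_iff.mp (hint A hA B hB)
  have hxa : x ≠ a := fun h => haB (h ▸ hxB)
  have hxb : x = b := by
    rw [hAeq] at hxA
    rcases Finset.mem_insert.mp hxA with h | h
    · exact absurd h hxa
    · exact Finset.mem_singleton.mp h
  subst hxb
  obtain ⟨c₁, c₂, hc12, hBeq⟩ := Finset.card_eq_two.mp B.2.1
  -- normalize B.1 = {x, c} with c the other element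
  obtain ⟨c, hbc, hBeq'⟩ : ∃ c, x ≠ c ∧ B.1 = {x, c} := by
    rw [hBeq] at hxB
    rcases Finset.mem_insert.mp hxB with h | h
    · exact ⟨c₂, h ▸ hc12, by rw [hBeq, h]⟩
    · have h' := Finset.mem_singleton.mp h
      exact ⟨c₁, by rw [h']; exact hc12.symm, by rw [hBeq, h', Finset.pair_comm]⟩
  have hac : a ≠ c := fun h => haB (by rw [hBeq']; simp [h])
  obtain ⟨D, hD, hbD⟩ := hns x
  have haD : a ∈ D.1 := by
    obtain ⟨z, hzA, hzD⟩ := Finset.not_disjoint_iff.mp (hint A hA D hD)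
    rw [hAeq] at hzA
    rcases Finset.mem_insert.mp hzA with h | h
    · exact h ▸ hzD
    · exact absurd (Finset.mem_singleton.mp h ▸ hzD) hbD
  have hcD : c ∈ D.1 := by
    obtain ⟨z, hzB, hzD⟩ := Finset.not_disjoint_iff.mp (hint B hB D hD)
    rw [hBeq'] at hzB
    rcases Finset.mem_insert.mp hzB with h | h
    · exact absurd (h ▸ hzD) hbD
    · exact Finset.mem_singleton.mp h ▸ hzD
  have hDeq : D.1 = {a, c} := by
    refine (Finset.eq_of_subset_of_card_le ?_ ?_).symm
    · intro z hz
      rcases Finset.mem_insert.mp hz with h | h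
      · exact h ▸ haD
      · exact Finset.mem_singleton.mp h ▸ hcD
    · rw [D.2.1, Finset.card_insert_of_notMem (by simp [hac]), Finset.card_singleton]
  refine ⟨a, x, c, hab, hbc, hac, hAeq ▸ A.2.2, hBeq' ▸ B.2.2, hDeq ▸ D.2.2, ?_⟩
  intro E hE y hy
  by_contra hy3
  obtain ⟨p, q, hpq, hEeq⟩ := Finset.card_eq_two.mp E.2.1
  obtain ⟨w, hyw, hEeq'⟩ : ∃ w, y ≠ w ∧ E.1 = {y, w} := by
    rw [hEeq] at hy
    rcases Finset.mem_insert.mp hy with h | h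
    · exact ⟨q, h ▸ hpq, by rw [hEeq, h]⟩
    · have h' := Finset.mem_singleton.mp h
      exact ⟨p, by rw [h']; exact hpq.symm, by rw [hEeq, h', Finset.pair_comm]⟩
  have key : ∀ (P : Finset (Fin n)), P ⊆ {a, x, c} → (¬ Disjoint P E.1) → w ∈ P := by
    intro P hPsub hPd
    obtain ⟨z, hzP, hzE⟩ := Finset.not_disjoint_iff.mp hPd
    have hzy : z ≠ y := fun h => hy3 (hPsub (h ▸ hzP))
    rw [hEeq'] at hzE
    rcases Finset.mem_insert.mp hzE with h | h
    · exact absurd h hzy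
    · exact Finset.mem_singleton.mp h ▸ hzP
  have hwA : w ∈ ({a, x} : Finset (Fin n)) := by
    refine key _ ?_ (by rw [← hAeq]; exact hint A hA E hE)
    intro z hz; rcases Finset.mem_insert.mp hz with h | h
    · simp [h]
    · simp [Finset.mem_singleton.mp h]
  have hwB : w ∈ ({x, c} : Finset (Fin n)) := by
    refine key _ ?_ (by rw [← hBeq']; exact hint B hB E hE)
    intro z hz; rcases Finset.mem_insert.mp hz with h | h
    · simp [h]
    · simp [Finset.mem_singleton.mp h]
  have hwD : w ∈ ({a, c} : Finset (Fin n)) := by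
    refine key _ ?_ (by rw [← hDeq]; exact hint D hD E hE)
    intro z hz; rcases Finset.mem_insert.mp hz with h | h
    · simp [h]
    · simp [Finset.mem_singleton.mp h]
  simp only [Finset.mem_insert, Finset.mem_singleton] at hwA hwB hwD
  rcases hwA with h1 | h1
  · rcases hwB with h2 | h2
    · exact hab (h1.symm.trans h2)
    · exact hac (h1.symm.trans h2)
  · rcases hwD with h3 | h3
    · exact hab (h3.symm.trans h1)
    · exact hbc (h1.symm.trans h3)
def spr (n a d : ℕ) (h : a + d < n) : Finset (Fin n) :=
  {⟨a, by omega⟩, ⟨a + d, h⟩}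

lemma spr_inj {n a b d e : ℕ} (hd : 1 ≤ d) (he : 1 ≤ e)
    (ha : a + d < n) (hb : b + e < n) (h : spr n a d ha = spr n b e hb) :
    a = b ∧ d = e := by
  unfold spr at h
  have h1 : (⟨a, by omega⟩ : Fin n) ∈ ({⟨b, by omega⟩, ⟨b + e, hb⟩} : Finset (Fin n)) := by
    rw [← h]; simp
  have h2 : (⟨a + d, ha⟩ : Fin n) ∈ ({⟨b, by omega⟩, ⟨b + e, hb⟩} : Finset (Fin n)) := by
    rw [← h]; simp
  simp only [Finset.mem_insert, Finset.mem_singleton, Fin.mk.injEq] at h1 h2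
  omega

lemma spr_card {n a d : ℕ} (hd : 1 ≤ d) (h : a + d < n) : (spr n a d h).card = 2 := by
  rw [spr, Finset.card_insert_of_notMem (by simp; omega), Finset.card_singleton]

lemma abs_helper {x y : ℤ} (h : x ≤ y) : |x - y| = y - x := by
  rw [abs_sub_comm, abs_of_nonneg (by omega)]

lemma spr_stable {n a d : ℕ} (hd : 2 ≤ d) (hdn : d + 2 ≤ n) (h : a + d < n) :
    SStable n 2 (spr n a d h) := by
  intro i hi j hj hij
  unfold spr at hi hj
  simp only [Finset.mem_insert, Finset.mem_singleton] at hi hj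
  rcases hi with hi | hi <;> rcases hj with hj | hj <;> subst hi <;> subst hj
  · exact absurd rfl hij
  · simp only [Fin.val_mk]
    rw [abs_helper (by push_cast; omega)]
    constructor <;> push_cast <;> omega
  · simp only [Fin.val_mk]
    rw [abs_of_nonneg (by push_cast; omega)]
    constructor <;> push_cast <;> omega
  · exact absurd rfl hij

def sfam (n d : ℕ) (hdn : d < n) : Finset (Finset (Fin n)) :=
  (Finset.range (n - d)).attach.image
    (fun a => spr n a.1 d (by have := a.2; rw [Finset.mem_range] at this; omega))

lemma sfam_card (n d : ℕ) (hd : 1 ≤ d) (hdn : d < n) : (sfam n d hdn).card = n - d := by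
  rw [sfam, Finset.card_image_of_injective _ ?_, Finset.card_attach, Finset.card_range]
  intro a b hab
  exact Subtype.ext (spr_inj hd hd _ _ hab).1

set_option maxHeartbeats 2000000 in
lemma card_lower (n : ℕ) (hn : 7 ≤ n) :
    3 * n - 8 ≤ Fintype.card {S : Finset (Fin n) // S.card = 2 ∧ SStable n 2 S} := by
  have hmem : ∀ (a d : ℕ), 2 ≤ d → d + 2 ≤ n → ∀ h : a + d < n,
      (spr n a d h).card = 2 ∧ SStable n 2 (spr n a d h) := by
    intro a d hd hdn h
    exact ⟨spr_card (by omega) h, spr_stable hd hdn h⟩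
  have hsub : ∀ d : ℕ, ∀ hd : 2 ≤ d, ∀ hdn : d + 2 ≤ n,
      ∀ S ∈ sfam n d (show d < n by omega), S.card = 2 ∧ SStable n 2 S := by
    intro d hd hdn S hS
    obtain ⟨a, -, rfl⟩ := Finset.mem_image.mp hS
    exact hmem _ _ hd hdn _
  have hFP : ∀ S ∈ sfam n 2 (by omega) ∪ sfam n 3 (by omega) ∪ sfam n 4 (by omega)
      ∪ {spr n 0 5 (by omega : (0:ℕ) + 5 < n)}, S.card = 2 ∧ SStable n 2 S := by
    intro S hS
    rcases Finset.mem_union.mp hS with hS | hS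
    · rcases Finset.mem_union.mp hS with hS | hS
      · rcases Finset.mem_union.mp hS with hS | hS
        · exact hsub 2 (by omega) (by omega) _ hS
        · exact hsub 3 (by omega) (by omega) _ hS
      · exact hsub 4 (by omega) (by omega) _ hS
    · rw [Finset.mem_singleton.mp hS]
      exact hmem 0 5 (by omega) (by omega) _
  have hdisj : ∀ d e : ℕ, 1 ≤ d → 1 ≤ e → d ≠ e → ∀ hdn : d < n, ∀ hen : e < n,
      Disjoint (sfam n d hdn) (sfam n e hen) := by
    intro d e hd he hde hdn hen
    rw [Finset.disjoint_left]
    intro S hSd hSe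
    obtain ⟨a, -, rfl⟩ := Finset.mem_image.mp hSd
    obtain ⟨b, -, hb⟩ := Finset.mem_image.mp hSe
    exact hde ((spr_inj he hd _ _ hb).2 ▸ rfl)
  have hnotmem : ∀ d : ℕ, 1 ≤ d → d ≠ 5 → ∀ hdn : d < n,
      spr n 0 5 (by omega : (0:ℕ) + 5 < n) ∉ sfam n d hdn := by
    intro d hd hd5 hdn hmem'
    obtain ⟨a, -, ha⟩ := Finset.mem_image.mp hmem'
    exact hd5 (spr_inj hd (by omega) _ _ ha).2
  have hc2 := sfam_card n 2 (by omega) (by omega)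
  have hc3 := sfam_card n 3 (by omega) (by omega)
  have hc4 := sfam_card n 4 (by omega) (by omega)
  have hcard : (sfam n 2 (by omega) ∪ sfam n 3 (by omega) ∪ sfam n 4 (by omega)
      ∪ {spr n 0 5 (by omega : (0:ℕ) + 5 < n)}).card = 3 * n - 8 := by
    rw [Finset.card_union_of_disjoint ?g3, Finset.card_union_of_disjoint ?g2,
        Finset.card_union_of_disjoint ?g1, hc2, hc3, hc4, Finset.card_singleton]
    case g1 => exact hdisj 2 3 (by omega) (by omega) (by omega) _ _
    case g2 =>
      rw [Finset.disjoint_union_left]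
      exact ⟨hdisj 2 4 (by omega) (by omega) (by omega) _ _,
             hdisj 3 4 (by omega) (by omega) (by omega) _ _⟩
    case g3 =>
      rw [Finset.disjoint_union_left, Finset.disjoint_union_left]
      refine ⟨⟨?_, ?_⟩, ?_⟩ <;> rw [Finset.disjoint_singleton_right]
      · exact hnotmem 2 (by omega) (by omega) _
      · exact hnotmem 3 (by omega) (by omega) _
      · exact hnotmem 4 (by omega) (by omega) _
    omega
  obtain ⟨F, hFP', hcard'⟩ : ∃ F : Finset (Finset (Fin n)),
      (∀ S ∈ F, S.card = 2 ∧ SStable n 2 S) ∧ F.card = 3 * n - 8 := ⟨_, hFP, hcard⟩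
  have hinj : Fintype.card {S // S ∈ F} ≤
      Fintype.card {S : Finset (Fin n) // S.card = 2 ∧ SStable n 2 S} := by
    apply Fintype.card_le_of_injective (fun x => ⟨x.1, hFP' x.1 x.2⟩)
    intro x y h
    simp only [Subtype.mk.injEq] at h
    exact Subtype.ext h
  rw [Fintype.card_coe] at hinj
  omega
def skEmb (m : ℕ) (v : Fin (m + 1)) (i : Fin m) : Fin (m + 1) :=
  if i.val < v.val then i.castSucc else i.succ

lemma skEmb_val (m : ℕ) (v : Fin (m + 1)) (i : Fin m) :
    (skEmb m v i).val = if i.val < v.val then i.val else i.val + 1 := by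
  unfold skEmb; split <;> simp

lemma skEmb_lt (m : ℕ) (v : Fin (m + 1)) {i j : Fin m} (h : i.val < j.val) :
    (skEmb m v i).val < (skEmb m v j).val := by
  rw [skEmb_val, skEmb_val]; split_ifs <;> omega

lemma skEmb_inj (m : ℕ) (v : Fin (m + 1)) : Function.Injective (skEmb m v) := by
  intro i j h
  have h' : (skEmb m v i).val = (skEmb m v j).val := congrArg Fin.val h
  rw [skEmb_val, skEmb_val] at h'
  apply Fin.ext
  split_ifs at h' <;> omega

lemma skEmb_ne (m : ℕ) (v : Fin (m + 1)) (i : Fin m) : skEmb m v i ≠ v := by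
  intro h
  have h' := congrArg Fin.val h
  rw [skEmb_val] at h'
  split_ifs at h' <;> omega

lemma skEmb_stable (m : ℕ) (v : Fin (m + 1)) {S : Finset (Fin m)}
    (hS : SStable m 2 S) : SStable (m + 1) 2 (S.image (skEmb m v)) := by
  intro i' hi' j' hj' hne
  obtain ⟨i, hi, rfl⟩ := Finset.mem_image.mp hi'
  obtain ⟨j, hj, rfl⟩ := Finset.mem_image.mp hj'
  have hij : i ≠ j := by rintro rfl; exact hne rfl
  obtain ⟨hst1, hst2⟩ := hS i hi j hj hij
  have hvne : i.val ≠ j.val := fun h => hij (Fin.ext h)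
  have hiv := skEmb_val m v i
  have hjv := skEmb_val m v j
  rcases Nat.lt_or_ge i.val j.val with h | h
  · have h1 := skEmb_lt m v h
    rw [abs_helper (by exact_mod_cast h.le)] at hst1 hst2
    rw [abs_helper (by exact_mod_cast h1.le)]
    split_ifs at hiv hjv <;> (constructor <;> (push_cast [hiv, hjv]; omega))
  · have h' : j.val < i.val := by omega
    have h1 := skEmb_lt m v h'
    rw [abs_sub_comm, abs_helper (by exact_mod_cast h'.le)] at hst1 hst2
    rw [abs_sub_comm, abs_helper (by exact_mod_cast h1.le)]
    split_ifs at hiv hjv <;> (constructor <;> (push_cast [hiv, hjv]; omega))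

def skPhi (m : ℕ) (v : Fin (m + 1))
    (S : {S : Finset (Fin m) // S.card = 2 ∧ SStable m 2 S}) :
    {S : Finset (Fin (m+1)) // S.card = 2 ∧ SStable (m+1) 2 S} :=
  ⟨S.1.image (skEmb m v),
    by rw [Finset.card_image_of_injective _ (skEmb_inj m v), S.2.1],
    skEmb_stable m v S.2.2⟩

lemma skPhi_val (m : ℕ) (v : Fin (m + 1)) (S) :
    (skPhi m v S).1 = S.1.image (skEmb m v) := rfl

lemma star_reduce (m : ℕ) (t : ℕ) (ht : 1 ≤ t)
    (C : (stableKneser (m + 1) 2 2).Coloring (Fin t)) (α : Fin t)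
    (v : Fin (m + 1)) (hstar : ∀ A, C A = α → v ∈ A.1) :
    (stableKneser m 2 2).Colorable (t - 1) := by
  set Φ := skPhi m v with hΦ
  have hΦv : ∀ S, v ∉ (Φ S).1 := by
    intro S hv
    rw [hΦ, skPhi_val] at hv
    obtain ⟨i, -, hi⟩ := Finset.mem_image.mp hv
    exact skEmb_ne m v i hi
  have hΦadj : ∀ {S T}, (stableKneser m 2 2).Adj S T →
      (stableKneser (m+1) 2 2).Adj (Φ S) (Φ T) := by
    rintro S T ⟨hne, hdis⟩
    constructor
    · intro h
      apply hne
      apply Subtype.ext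
      have h' : (Φ S).1 = (Φ T).1 := congrArg Subtype.val h
      rw [hΦ, skPhi_val, skPhi_val] at h'
      exact Finset.image_injective (skEmb_inj m v) h'
    · rw [hΦ, skPhi_val, skPhi_val]
      exact (Finset.disjoint_image (skEmb_inj m v)).mpr hdis
  have D : (stableKneser m 2 2).Coloring {β : Fin t // β ≠ α} := by
    refine SimpleGraph.Coloring.mk
      (fun S => ⟨C (Φ S), fun h => hΦv S (hstar _ h)⟩) ?_
    intro S T hadj h
    have h' : C (Φ S) = C (Φ T) := congrArg Subtype.val h
    exact C.valid (hΦadj hadj) h'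
  have hcard : Fintype.card {β : Fin t // β ≠ α} = t - 1 := by
    simp [Fintype.card_subtype_compl]
  exact hcard ▸ D.colorable
-- upper bound: Colorable (n-2)
lemma upper (n : ℕ) (hn : 4 ≤ n) : (stableKneser n 2 2).Colorable (n - 2) := by
  have h2 : 0 < n - 2 := by omega
  refine ⟨SimpleGraph.Coloring.mk
    (fun A => ⟨min (A.1.min' (Finset.card_pos.mp (by rw [A.2.1]; norm_num))).val (n - 3),
      by omega⟩) ?_⟩
  rintro A B ⟨hne, hdis⟩ hc
  simp only [Fin.mk.injEq] at hc
  set a := A.1.min' (Finset.card_pos.mp (by rw [A.2.1]; norm_num)) with ha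
  set b := B.1.min' (Finset.card_pos.mp (by rw [B.2.1]; norm_num)) with hb
  have haA : a ∈ A.1 := Finset.min'_mem _ _
  have hbB : b ∈ B.1 := Finset.min'_mem _ _
  by_cases h : a.val < n - 3
  · -- colors equal, a.val < n-3 so min = a.val, so b.val = a.val
    have : a = b := by
      apply Fin.ext
      omega
    exact (Finset.disjoint_left.mp hdis haA) (this ▸ hbB)
  · -- a.val ≥ n-3, hence b.val ≥ n-3; all elements of A ∪ B in the 3-set
    have hbn : ¬ b.val < n - 3 := by omega
    have hsub : A.1 ∪ B.1 ⊆ {(⟨n-3, by omega⟩ : Fin n), ⟨n-2, by omega⟩, ⟨n-1, by omega⟩} := by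
      intro x hx
      have hxge : n - 3 ≤ x.val := by
        rcases Finset.mem_union.mp hx with h' | h'
        · exact le_trans (by omega) (Finset.min'_le _ _ h')
        · exact le_trans (by omega) (Finset.min'_le _ _ h')
      have hxlt := x.isLt
      simp only [Finset.mem_insert, Finset.mem_singleton]
      have : x.val = n-3 ∨ x.val = n-2 ∨ x.val = n-1 := by omega
      rcases this with h' | h' | h'
      · exact Or.inl (Fin.ext h')
      · exact Or.inr (Or.inl (Fin.ext h'))
      · exact Or.inr (Or.inr (Fin.ext h'))
    have hcard : (A.1 ∪ B.1).card = 4 := by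
      rw [Finset.card_union_of_disjoint hdis, A.2.1, B.2.1]
    have := Finset.card_le_card hsub
    rw [hcard] at this
    have h3 : ({(⟨n-3, by omega⟩ : Fin n), ⟨n-2, by omega⟩, ⟨n-1, by omega⟩} : Finset (Fin n)).card ≤ 3 := by
      apply (Finset.card_insert_le _ _).trans
      have := Finset.card_insert_le (⟨n-2, by omega⟩ : Fin n) ({⟨n-1, by omega⟩} : Finset (Fin n))
      simp only [Finset.card_singleton] at this ⊢
      omega
    omega
lemma same_color_not_disjoint {n t : ℕ}
    (C : (stableKneser n 2 2).Coloring (Fin t)) {A B}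
    (h : C A = C B) : ¬ Disjoint A.1 B.1 := by
  by_cases hAB : A = B
  · subst hAB
    intro hd
    have h0 : A.1 = ∅ := disjoint_self.mp hd
    have h2 := A.2.1
    rw [h0] at h2
    simp at h2
  · exact fun hd => C.valid ⟨hAB, hd⟩ h

lemma stable_pair_bounds {n : ℕ} {x y : Fin n} (h : x ≠ y) (hs : SStable n 2 {x, y}) :
    (2 ≤ (x.val:ℤ) - y.val ∧ (x.val:ℤ) - y.val ≤ (n:ℤ) - 2) ∨
    (2 ≤ (y.val:ℤ) - x.val ∧ (y.val:ℤ) - x.val ≤ (n:ℤ) - 2) := by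
  obtain ⟨h1, h2⟩ := hs x (by simp) y (by simp) h
  rcases abs_cases ((x.val:ℤ) - y.val) with ⟨he, -⟩ | ⟨he, -⟩
  · left; rw [he] at h1 h2; exact ⟨h1, h2⟩
  · right; rw [he] at h1 h2; constructor <;> omega

lemma fiber_card_le {n : ℕ} (hn : 1 ≤ n)
    (𝒞 : Finset {S : Finset (Fin n) // S.card = 2 ∧ SStable n 2 S})
    (hint : ∀ A ∈ 𝒞, ∀ B ∈ 𝒞, ¬ Disjoint A.1 B.1)
    (hns : ∀ v : Fin n, ∃ A ∈ 𝒞, v ∉ A.1) : 𝒞.card ≤ 3 := by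
  obtain ⟨a, b, c, -, -, -, -, -, -, hsub⟩ := triangle_lemma hn 𝒞 hint hns
  calc 𝒞.card = (𝒞.image Subtype.val).card :=
        (Finset.card_image_of_injective _ Subtype.val_injective).symm
    _ ≤ (Finset.powersetCard 2 {a, b, c}).card := by
        apply Finset.card_le_card
        intro S hS
        obtain ⟨E, hE, rfl⟩ := Finset.mem_image.mp hS
        exact Finset.mem_powersetCard.mpr ⟨hsub E hE, E.2.1⟩
    _ = ({a, b, c} : Finset (Fin n)).card.choose 2 := Finset.card_powersetCard _ _
    _ ≤ Nat.choose 3 2 := by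
        apply Nat.choose_le_choose
        apply (Finset.card_insert_le _ _).trans
        have := Finset.card_insert_le b ({c} : Finset (Fin n))
        simp only [Finset.card_singleton] at this ⊢
        omega
    _ = 3 := by norm_num
lemma sk_lower : ∀ n : ℕ, 4 ≤ n → ¬ (stableKneser n 2 2).Colorable (n - 3) := by
  intro n hn
  induction n, hn using Nat.le_induction with
  | base =>
    rintro ⟨C⟩
    have hA : ((0:ℕ) + 2 < 4) := by omega
    have hB : ((1:ℕ) + 2 < 4) := by omega
    set A : {S : Finset (Fin 4) // S.card = 2 ∧ SStable 4 2 S} :=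
      ⟨spr 4 0 2 hA, spr_card (by omega) hA, spr_stable (by omega) (by omega) hA⟩ with hAdef
    set B : {S : Finset (Fin 4) // S.card = 2 ∧ SStable 4 2 S} :=
      ⟨spr 4 1 2 hB, spr_card (by omega) hB, spr_stable (by omega) (by omega) hB⟩ with hBdef
    have hadj : (stableKneser 4 2 2).Adj A B := by
      constructor
      · intro h
        have h' : A.1 = B.1 := congrArg Subtype.val h
        rw [hAdef, hBdef] at h'
        exact absurd ((spr_inj (by omega) (by omega) hA hB h').1) (by omega)
      · rw [hAdef, hBdef]
        unfold spr
        rw [Finset.disjoint_left]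
        intro x hx hx'
        simp only [Finset.mem_insert, Finset.mem_singleton, Fin.mk.injEq] at hx hx'
        have hxv := x.isLt
        rcases hx with h | h <;> rcases hx' with h' | h' <;>
          · have h1 := congrArg Fin.val h
            have h2 := congrArg Fin.val h'
            simp only [Fin.val_mk] at h1 h2
            omega
    apply C.valid hadj
    apply Fin.ext
    have g1 := (C A).isLt
    have g2 := (C B).isLt
    omega
  | succ n hn ih =>
    rintro ⟨C⟩
    by_cases hstar : ∃ α v, ∀ A, C A = α → v ∈ A.1
    · obtain ⟨α, v, hst⟩ := hstar
      have hred := star_reduce n (n + 1 - 3) (by omega) C α v hst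
      have : n + 1 - 3 - 1 = n - 3 := by omega
      rw [this] at hred
      exact ih hred
    · push_neg at hstar
      by_cases hn7 : 7 ≤ n + 1
      · -- counting case
        have hcount := card_lower (n + 1) hn7
        classical
        have hsum : Fintype.card {S : Finset (Fin (n+1)) // S.card = 2 ∧ SStable (n+1) 2 S}
            = ∑ α ∈ Finset.univ, (Finset.univ.filter fun A => C A = α).card := by
          rw [← Finset.card_univ]
          exact Finset.card_eq_sum_card_fiberwise (fun x _ => Finset.mem_univ _)
        have hfib : ∀ α : Fin (n + 1 - 3),
            (Finset.univ.filter fun A => C A = α).card ≤ 3 := by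
          intro α
          apply fiber_card_le (by omega)
          · intro A hA B hB
            have h1 := (Finset.mem_filter.mp hA).2
            have h2 := (Finset.mem_filter.mp hB).2
            exact same_color_not_disjoint C (h1.trans h2.symm)
          · intro v
            obtain ⟨A, hA, hv⟩ := hstar α v
            exact ⟨A, Finset.mem_filter.mpr ⟨Finset.mem_univ _, hA⟩, hv⟩
        have hle : ∑ α ∈ Finset.univ, (Finset.univ.filter fun A => C A = α).card
            ≤ (Finset.univ : Finset (Fin (n + 1 - 3))).card * 3 := by
          rw [Finset.card_univ]
          calc _ ≤ ∑ _α ∈ (Finset.univ : Finset (Fin (n + 1 - 3))), 3 :=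
                Finset.sum_le_sum (fun α _ => hfib α)
            _ = Fintype.card (Fin (n + 1 - 3)) * 3 := by
                rw [Finset.sum_const, Finset.card_univ, smul_eq_mul]
        rw [Finset.card_univ, Fintype.card_fin] at hle
        omega
      · -- n = 4 or n = 5
        have hsmall : n = 4 ∨ n = 5 := by omega
        rcases hsmall with rfl | rfl
        · -- N = 5 : no triangle of stable pairs at all
          obtain ⟨a, b, c, hab, hbc, hac, s1, s2, s3, -⟩ :=
            triangle_lemma (n := 5) (by omega)
              (Finset.univ.filter fun A => C A = 0)
              (by
                intro A hA B hB
                have h1 := (Finset.mem_filter.mp hA).2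
                have h2 := (Finset.mem_filter.mp hB).2
                exact same_color_not_disjoint C (h1.trans h2.symm))
              (by
                intro v
                obtain ⟨A, hA, hv⟩ := hstar 0 v
                exact ⟨A, Finset.mem_filter.mpr ⟨Finset.mem_univ _, hA⟩, hv⟩)
          have d1 := stable_pair_bounds hab s1
          have d2 := stable_pair_bounds hbc s2
          have d3 := stable_pair_bounds hac s3
          have ha5 := a.isLt
          have hb5 := b.isLt
          have hc5 := c.isLt
          rcases d1 with ⟨e1, f1⟩ | ⟨e1, f1⟩ <;> rcases d2 with ⟨e2, f2⟩ | ⟨e2, f2⟩ <;>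
            rcases d3 with ⟨e3, f3⟩ | ⟨e3, f3⟩ <;> omega
        · -- N = 6 : the vertex {0,3} cannot lie in a triangle
          have h03 : ((0:ℕ) + 3 < 6) := by omega
          set A₀ : {S : Finset (Fin 6) // S.card = 2 ∧ SStable 6 2 S} :=
            ⟨spr 6 0 3 h03, spr_card (by omega) h03, spr_stable (by omega) (by omega) h03⟩
            with hA₀def
          obtain ⟨a, b, c, hab, hbc, hac, s1, s2, s3, hsub⟩ :=
            triangle_lemma (n := 6) (by omega)
              (Finset.univ.filter fun A => C A = C A₀)
              (by
                intro A hA B hB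
                have h1 := (Finset.mem_filter.mp hA).2
                have h2 := (Finset.mem_filter.mp hB).2
                exact same_color_not_disjoint C (h1.trans h2.symm))
              (by
                intro v
                obtain ⟨A, hA, hv⟩ := hstar (C A₀) v
                exact ⟨A, Finset.mem_filter.mpr ⟨Finset.mem_univ _, hA⟩, hv⟩)
          have hA₀mem : A₀ ∈ Finset.univ.filter (fun A => C A = C A₀) :=
            Finset.mem_filter.mpr ⟨Finset.mem_univ _, rfl⟩
          have hsub0 := hsub A₀ hA₀mem
          have h0mem : (⟨0, by omega⟩ : Fin 6) ∈ A₀.1 := by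
            rw [hA₀def]; unfold spr; simp
          have h3mem : (⟨3, by omega⟩ : Fin 6) ∈ A₀.1 := by
            rw [hA₀def]; unfold spr; simp
          have h0 := hsub0 h0mem
          have h3 := hsub0 h3mem
          simp only [Finset.mem_insert, Finset.mem_singleton] at h0 h3
          have d1 := stable_pair_bounds hab s1
          have d2 := stable_pair_bounds hbc s2
          have d3 := stable_pair_bounds hac s3
          have ha6 := a.isLt
          have hb6 := b.isLt
          have hc6 := c.isLt
          have h0' : a.val = 0 ∨ b.val = 0 ∨ c.val = 0 := by
            rcases h0 with h | h | h
            · exact Or.inl (congrArg Fin.val h).symm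
            · exact Or.inr (Or.inl (congrArg Fin.val h).symm)
            · exact Or.inr (Or.inr (congrArg Fin.val h).symm)
          have h3' : a.val = 3 ∨ b.val = 3 ∨ c.val = 3 := by
            rcases h3 with h | h | h
            · exact Or.inl (congrArg Fin.val h).symm
            · exact Or.inr (Or.inl (congrArg Fin.val h).symm)
            · exact Or.inr (Or.inr (congrArg Fin.val h).symm)
          rcases d1 with ⟨e1, f1⟩ | ⟨e1, f1⟩ <;> rcases d2 with ⟨e2, f2⟩ | ⟨e2, f2⟩ <;>
            rcases d3 with ⟨e3, f3⟩ | ⟨e3, f3⟩ <;> omega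

theorem stmt_17 (n : ℕ) (hn : 4 ≤ n) :
    (stableKneser n 2 2).chromaticNumber = ((n - 2 : ℕ) : ℕ∞) := by
  apply le_antisymm
  · exact (upper n hn).chromaticNumber_le
  · have hnc : ¬ (stableKneser n 2 2).chromaticNumber ≤ ((n - 3 : ℕ) : ℕ∞) := by
      rw [SimpleGraph.chromaticNumber_le_iff_colorable]
      exact sk_lower n hn
    have hlt : ((n - 3 : ℕ) : ℕ∞) < (stableKneser n 2 2).chromaticNumber := lt_of_not_ge hnc
    have := Order.add_one_le_of_lt hlt
    have hcast : ((n - 3 : ℕ) : ℕ∞) + 1 = ((n - 2 : ℕ) : ℕ∞) := by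
      rw [← Nat.cast_one, ← Nat.cast_add]
      congr 1
      omega
    rwa [hcast] at this
end
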